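/- arXiv:math/0609339 — 2 statements merged into one kernel-verified Lean document; each statement's English description precedes it below -/
import Mathlib

section
/- Let T be a tree with n vertices, and let a ≥ 1 and b ≥ 0 be integers. Then the number of nonempty subsets A ⊆ E(T) with #A = a and #K(A) = b equals Σ_{λ ⊢ n} ψ(λ,a,b) · c_λ(T), where for a partition λ = (λ_1 ≥ … ≥ λ_ℓ) of n one sets ψ(λ,a,b) = (−1)^{a+b} C(ℓ−1, ℓ−n+a+b) Σ_{k=1}^{ℓ} C(λ_k−1, a), with the convention C(p,q) = 0 if q < 0 or q > p. -/
open SimpleGraph Finset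

variable {V : Type*} {W : Type*}

open Classical in
/-- `edgeSetType A` : the "type" of the edge set `A`, i.e. the partition (as a multiset of
positive integers) of `#V` whose parts are the orders of the connected components of the
spanning subgraph `(V, A)`. -/
noncomputable def edgeSetType [Fintype V] (A : Finset (Sym2 V)) : Multiset ℕ :=
  ((Finset.univ : Finset V).image
    (fun v => (SimpleGraph.fromEdgeSet (↑A : Set (Sym2 V))).connectedComponentMk v)).val.map
    (fun c => c.supp.ncard)

open Classical in
/-- `cCoeff G λ = Σ_{A ⊆ E(G), type(A) = λ} (−1)^{#A}`, the coefficient of the power-sum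
symmetric function `p_λ` in the chromatic symmetric function `X_G`. -/
noncomputable def cCoeff [Fintype V] (G : SimpleGraph V) (lam : Multiset ℕ) : ℤ :=
  ∑ A ∈ (Finset.univ : Finset (Sym2 V)).powerset,
    if (↑A : Set (Sym2 V)) ⊆ G.edgeSet ∧ edgeSetType A = lam then (-1 : ℤ) ^ A.card else 0

open Classical in
/-- `NCoeff G λ` : the number of edge sets `A ⊆ E(G)` with `type(A) = λ`. -/
noncomputable def NCoeff [Fintype V] (G : SimpleGraph V) (lam : Multiset ℕ) : ℕ :=
  ((Finset.univ : Finset (Sym2 V)).powerset.filter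
    (fun (A : Finset (Sym2 V)) => (↑A : Set (Sym2 V)) ⊆ G.edgeSet ∧ edgeSetType A = lam)).card

/-- `S` is a subtree of `T`: a nonempty set of edges of `T` such that the subgraph consisting of
the edges of `S` together with their endpoints is connected. -/
def IsSubtreeSet (T : SimpleGraph V) (S : Set (Sym2 V)) : Prop :=
  S.Nonempty ∧ S ⊆ T.edgeSet ∧
    ((SimpleGraph.fromEdgeSet S).induce {v | ∃ e ∈ S, v ∈ e}).Connected

/-- The leaf edges of an edge set `S` : edges of `S` having an endpoint incident to no other
edge of `S`. -/
def leafEdges (S : Set (Sym2 V)) : Set (Sym2 V) :=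
  {e | e ∈ S ∧ ∃ v ∈ e, ∀ e' ∈ S, v ∈ e' → e' = e}

/-- The connector `K(A)` of a (nonempty) edge set `A` of a tree `T`: the minimal subset `K` of
`E(T) \ A` such that `A ∪ K` is a subtree of `T`. -/
def connector (T : SimpleGraph V) (A : Set (Sym2 V)) : Set (Sym2 V) :=
  ⋂₀ {B | B ⊆ T.edgeSet \ A ∧ IsSubtreeSet T (A ∪ B)}

/-- Integer-valued binomial coefficient `C(p, q)` with the convention `C(p,q) = 0` for `q < 0`
(and, as usual, for `q > p`). -/
def chooseInt (p : ℕ) (q : ℤ) : ℤ := if 0 ≤ q then (p.choose q.toNat : ℤ) else 0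

/-- `ψ(λ,a,b) = (−1)^{a+b} C(ℓ−1, ℓ−n+a+b) Σ_{k=1}^{ℓ} C(λ_k − 1, a)` for a partition `λ` of
`n` with `ℓ` parts. -/
def psi (n : ℕ) (lam : Multiset ℕ) (a b : ℕ) : ℤ :=
  (-1 : ℤ) ^ (a + b) * chooseInt (lam.card - 1) ((lam.card : ℤ) - n + a + b) *
    (lam.map (fun m => ((m - 1).choose a : ℤ))).sum

/-- `φ(λ,i,j) = (−1)^{i+j} C(ℓ−1, ℓ−n+i) Σ_{d=1}^{j} (−1)^d C(i−d, j−d) Σ_{k=1}^{ℓ} C(λ_k−1, d)`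
for a partition `λ` of `n` with `ℓ` parts. -/
def phi (n : ℕ) (lam : Multiset ℕ) (i j : ℕ) : ℤ :=
  (-1 : ℤ) ^ (i + j) * chooseInt (lam.card - 1) ((lam.card : ℤ) - n + i) *
    ∑ d ∈ Finset.Icc 1 j, (-1 : ℤ) ^ d * ((i - d).choose (j - d) : ℤ) *
      (lam.map (fun m => ((m - 1).choose d : ℤ))).sum

open SimpleGraph Finset

namespace StmtAux

/-- endpoint set of an edge set -/
abbrev epts (S : Set (Sym2 V)) : Set V := {v | ∃ e ∈ S, v ∈ e}

lemma induce_reachable {G : SimpleGraph V} {s : Set V}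
    (hcl : ∀ ⦃x y⦄, G.Adj x y → x ∈ s → y ∈ s) {u v : V} (hr : G.Reachable u v)
    (hu : u ∈ s) (hv : v ∈ s) : (G.induce s).Reachable ⟨u, hu⟩ ⟨v, hv⟩ := by
  obtain ⟨p⟩ := hr
  induction p with
  | nil => exact Reachable.refl _
  | @cons a b c h q ih =>
    have hb : b ∈ s := hcl h hu
    have h1 : (G.induce s).Adj ⟨a, hu⟩ ⟨b, hb⟩ := h
    exact h1.reachable.trans (ih hb hv)

lemma reachable_of_induce {G : SimpleGraph V} {s : Set V} {x y : s}
    (h : (G.induce s).Reachable x y) : G.Reachable x y :=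
  h.map (SimpleGraph.Embedding.induce s).toHom

lemma fromEdgeSet_le {T : SimpleGraph V} {S : Set (Sym2 V)} (h : S ⊆ T.edgeSet) :
    SimpleGraph.fromEdgeSet S ≤ T := by
  conv_rhs => rw [← fromEdgeSet_edgeSet T]
  exact SimpleGraph.fromEdgeSet_mono h

lemma mem_of_walk_edges {S : Set (Sym2 V)} {u v : V} {p : (SimpleGraph.fromEdgeSet S).Walk u v}
    {e : Sym2 V} (he : e ∈ p.edges) : e ∈ S := by
  have h := p.edges_subset_edgeSet he
  rw [edgeSet_fromEdgeSet] at h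
  exact h.1

lemma subtree_reachable {T : SimpleGraph V} {S : Set (Sym2 V)} (h : IsSubtreeSet T S)
    {u v : V} (hu : u ∈ epts S) (hv : v ∈ epts S) :
    (SimpleGraph.fromEdgeSet S).Reachable u v :=
  reachable_of_induce (h.2.2.preconnected ⟨u, hu⟩ ⟨v, hv⟩)

lemma epts_closed {S : Set (Sym2 V)} ⦃x y : V⦄ (h : (SimpleGraph.fromEdgeSet S).Adj x y)
    (_ : x ∈ epts S) : y ∈ epts S := by
  rw [SimpleGraph.fromEdgeSet_adj] at h
  exact ⟨s(x, y), h.1, Sym2.mem_mk_right x y⟩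

/-- every edge of every `T`-path between endpoints of a subtree lies in the subtree -/
lemma path_edges_subset {T : SimpleGraph V} (hT : T.IsTree) {S : Set (Sym2 V)}
    (hS : IsSubtreeSet T S) {u v : V} (hu : u ∈ epts S) (hv : v ∈ epts S)
    (p : T.Walk u v) (hp : p.IsPath) : ∀ e ∈ p.edges, e ∈ S := by
  classical
  obtain ⟨q⟩ := subtree_reachable hS hu hv
  have hqe : ∀ e ∈ q.edges, e ∈ T.edgeSet := fun e he => hS.2.1 (mem_of_walk_edges he)
  have hre : ∀ e ∈ (q.transfer T hqe).edges, e ∈ S := by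
    intro e he
    rw [SimpleGraph.Walk.edges_transfer] at he
    exact mem_of_walk_edges he
  have hbp : (q.transfer T hqe).bypass.IsPath := SimpleGraph.Walk.bypass_isPath _
  have hpq : p = (q.transfer T hqe).bypass := by
    have := hT.IsAcyclic.path_unique ⟨p, hp⟩ ⟨(q.transfer T hqe).bypass, hbp⟩
    exact congrArg Subtype.val this
  intro e he
  rw [hpq] at he
  exact hre e ((q.transfer T hqe).edges_bypass_subset he)

lemma isSubtreeSet_inter {T : SimpleGraph V} (hT : T.IsTree) {S₁ S₂ : Set (Sym2 V)}
    (h₁ : IsSubtreeSet T S₁) (h₂ : IsSubtreeSet T S₂) (hne : (S₁ ∩ S₂).Nonempty) :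
    IsSubtreeSet T (S₁ ∩ S₂) := by
  classical
  refine ⟨hne, fun e he => h₁.2.1 he.1, ?_⟩
  rw [connected_iff]
  constructor
  · rintro ⟨u, hu⟩ ⟨v, hv⟩
    have hu1 : u ∈ epts S₁ := by obtain ⟨e, he, hue⟩ := hu; exact ⟨e, he.1, hue⟩
    have hv1 : v ∈ epts S₁ := by obtain ⟨e, he, hue⟩ := hv; exact ⟨e, he.1, hue⟩
    have hu2 : u ∈ epts S₂ := by obtain ⟨e, he, hue⟩ := hu; exact ⟨e, he.2, hue⟩
    have hv2 : v ∈ epts S₂ := by obtain ⟨e, he, hue⟩ := hv; exact ⟨e, he.2, hue⟩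
    obtain ⟨w⟩ := hT.isConnected.preconnected u v
    have hp : w.toPath.val.IsPath := w.toPath.2
    have he1 := path_edges_subset hT h₁ hu1 hv1 w.toPath.val hp
    have he2 := path_edges_subset hT h₂ hu2 hv2 w.toPath.val hp
    have hedges : ∀ e ∈ (w.toPath.val).edges, e ∈ (SimpleGraph.fromEdgeSet (S₁ ∩ S₂)).edgeSet := by
      intro e he
      rw [edgeSet_fromEdgeSet]
      exact ⟨⟨he1 e he, he2 e he⟩, T.not_isDiag_of_mem_edgeSet (w.toPath.val.edges_subset_edgeSet he)⟩
    have hr : (SimpleGraph.fromEdgeSet (S₁ ∩ S₂)).Reachable u v :=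
      ⟨(w.toPath.val).transfer _ hedges⟩
    exact induce_reachable epts_closed hr hu hv
  · obtain ⟨e, he⟩ := hne
    exact ⟨⟨e.out.1, e, he, Sym2.out_fst_mem e⟩⟩

lemma exists_incident {T : SimpleGraph V} (hT : T.IsTree) (hne : T.edgeSet.Nonempty) (v : V) :
    ∃ e ∈ T.edgeSet, v ∈ e := by
  obtain ⟨e, he⟩ := hne
  induction e with
  | h x y =>
    by_cases hvx : v = x
    · exact ⟨s(x, y), he, hvx ▸ Sym2.mem_mk_left x y⟩
    · obtain ⟨p⟩ := hT.isConnected.preconnected v x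
      cases p with
      | nil => exact absurd rfl hvx
      | cons h q => exact ⟨s(v, _), h, Sym2.mem_mk_left _ _⟩

lemma isSubtreeSet_full {T : SimpleGraph V} (hT : T.IsTree) (hne : T.edgeSet.Nonempty) :
    IsSubtreeSet T T.edgeSet := by
  have hepts : {v | ∃ e ∈ T.edgeSet, v ∈ e} = Set.univ :=
    Set.eq_univ_of_forall fun v => exists_incident hT hne v
  refine ⟨hne, subset_rfl, ?_⟩
  rw [fromEdgeSet_edgeSet, hepts]
  exact (SimpleGraph.induceUnivIso T).connected_iff.mpr hT.isConnected

/-- the family of candidate connectors -/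
abbrev Fam (T : SimpleGraph V) (A : Set (Sym2 V)) : Set (Set (Sym2 V)) :=
  {B | B ⊆ T.edgeSet \ A ∧ IsSubtreeSet T (A ∪ B)}

lemma fam_inter {T : SimpleGraph V} (hT : T.IsTree) {A : Set (Sym2 V)} (hA : A.Nonempty)
    {B₁ B₂ : Set (Sym2 V)} (h₁ : B₁ ∈ Fam T A) (h₂ : B₂ ∈ Fam T A) : B₁ ∩ B₂ ∈ Fam T A := by
  constructor
  · exact fun e he => h₁.1 he.1
  · have hd : A ∪ B₁ ∩ B₂ = (A ∪ B₁) ∩ (A ∪ B₂) := Set.union_inter_distrib_left A B₁ B₂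
    rw [hd]
    exact isSubtreeSet_inter hT h₁.2 h₂.2
      (hA.mono (Set.subset_inter Set.subset_union_left Set.subset_union_left))

lemma fam_nonempty {T : SimpleGraph V} (hT : T.IsTree) {A : Set (Sym2 V)} (hA : A.Nonempty)
    (hAE : A ⊆ T.edgeSet) : (T.edgeSet \ A) ∈ Fam T A := by
  refine ⟨subset_rfl, ?_⟩
  rw [Set.union_diff_cancel hAE]
  exact isSubtreeSet_full hT (hA.mono hAE)

lemma connector_mem_fam [Fintype V] {T : SimpleGraph V} (hT : T.IsTree) {A : Set (Sym2 V)}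
    (hA : A.Nonempty) (hAE : A ⊆ T.edgeSet) : connector T A ∈ Fam T A := by
  classical
  have hfin : (Fam T A).Finite := Set.toFinite _
  have hne : (Fam T A).Nonempty := ⟨_, fam_nonempty hT hA hAE⟩
  obtain ⟨B₀, hB₀, hmin⟩ := Set.exists_min_image (Fam T A) Set.ncard hfin hne
  have hsub : ∀ B ∈ Fam T A, B₀ ⊆ B := by
    intro B hB
    have hI := fam_inter hT hA hB₀ hB
    have h2 : B₀.ncard ≤ (B₀ ∩ B).ncard := hmin _ hI
    have h3 : B₀ ∩ B = B₀ :=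
      Set.eq_of_subset_of_ncard_le Set.inter_subset_left h2 (Set.toFinite _)
    rw [← h3]
    exact Set.inter_subset_right
  have hconn : connector T A = B₀ :=
    subset_antisymm (Set.sInter_subset_of_mem hB₀) (Set.subset_sInter hsub)
  rw [hconn]
  exact hB₀

lemma connector_subset_of_mem {T : SimpleGraph V} {A B : Set (Sym2 V)} (hB : B ∈ Fam T A) :
    connector T A ⊆ B := Set.sInter_subset_of_mem hB

end StmtAux

open SimpleGraph Finset

namespace StmtAux

variable {V : Type*}

open Classical in
noncomputable def comps [Fintype V] (B : Finset (Sym2 V)) :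
    Finset (SimpleGraph.fromEdgeSet (↑B : Set (Sym2 V))).ConnectedComponent :=
  (Finset.univ : Finset V).image
    (fun v => (SimpleGraph.fromEdgeSet (↑B : Set (Sym2 V))).connectedComponentMk v)

open Classical in
noncomputable def compEdges [Fintype V] (B : Finset (Sym2 V))
    (c : (SimpleGraph.fromEdgeSet (↑B : Set (Sym2 V))).ConnectedComponent) : Finset (Sym2 V) :=
  B.filter (fun e => ∀ v ∈ e, v ∈ c.supp)

lemma mem_comps [Fintype V] (B : Finset (Sym2 V))
    (c : (SimpleGraph.fromEdgeSet (↑B : Set (Sym2 V))).ConnectedComponent) : c ∈ comps B := by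
  classical
  obtain ⟨v, hv⟩ := c.exists_rep
  rw [comps]
  exact Finset.mem_image.2 ⟨v, Finset.mem_univ v, by exact hv⟩

lemma supp_closed [Fintype V] {B : Finset (Sym2 V)}
    {c : (SimpleGraph.fromEdgeSet (↑B : Set (Sym2 V))).ConnectedComponent} ⦃x y : V⦄
    (h : (SimpleGraph.fromEdgeSet (↑B : Set (Sym2 V))).Adj x y) (hx : x ∈ c.supp) : y ∈ c.supp := by
  rw [SimpleGraph.ConnectedComponent.mem_supp_iff] at hx ⊢
  rw [← hx]
  exact (SimpleGraph.ConnectedComponent.connectedComponentMk_eq_of_adj h).symm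

lemma sum_supp_ncard [Fintype V] (B : Finset (Sym2 V)) :
    ∑ c ∈ comps B, c.supp.ncard = Fintype.card V := by
  classical
  have h := Finset.card_eq_sum_card_fiberwise
    (f := fun v => (SimpleGraph.fromEdgeSet (↑B : Set (Sym2 V))).connectedComponentMk v)
    (s := (Finset.univ : Finset V)) (t := comps B) (fun v _ => mem_comps B _)
  rw [Finset.card_univ] at h
  rw [h]
  refine Finset.sum_congr rfl fun c _ => ?_
  rw [← Set.ncard_coe_finset]
  congr 1
  ext v
  simp [SimpleGraph.ConnectedComponent.mem_supp_iff]

/-- walk support reachability -/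
lemma reachable_of_mem_support {G : SimpleGraph V} {u v : V} (p : G.Walk u v) :
    ∀ w ∈ p.support, G.Reachable u w := by
  induction p with
  | nil =>
    intro w hw
    rw [SimpleGraph.Walk.support_nil, List.mem_singleton] at hw
    exact hw ▸ Reachable.refl _
  | @cons a b c h q ih =>
    intro w hw
    rw [SimpleGraph.Walk.support_cons, List.mem_cons] at hw
    rcases hw with rfl | hw
    · exact Reachable.refl _
    · exact h.reachable.trans (ih w hw)

/-- the component edge sets are "subtrees": their induced graph is connected -/
lemma compEdges_connected [Fintype V] {T : SimpleGraph V} {B : Finset (Sym2 V)}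
    (hB : (↑B : Set (Sym2 V)) ⊆ T.edgeSet)
    (c : (SimpleGraph.fromEdgeSet (↑B : Set (Sym2 V))).ConnectedComponent)
    {u v : V} (hu : u ∈ epts (↑(compEdges B c) : Set (Sym2 V)))
    (hv : v ∈ epts (↑(compEdges B c) : Set (Sym2 V))) :
    (SimpleGraph.fromEdgeSet (↑(compEdges B c) : Set (Sym2 V))).Reachable u v := by
  classical
  have hmem : ∀ {w : V}, w ∈ epts (↑(compEdges B c) : Set (Sym2 V)) → w ∈ c.supp := by
    intro w hw
    obtain ⟨e, he, hwe⟩ := hw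
    rw [Finset.mem_coe, compEdges, Finset.mem_filter] at he
    exact he.2 w hwe
  have hus : u ∈ c.supp := hmem hu
  have hvs : v ∈ c.supp := hmem hv
  have hr : (SimpleGraph.fromEdgeSet (↑B : Set (Sym2 V))).Reachable u v := by
    rw [SimpleGraph.ConnectedComponent.mem_supp_iff] at hus hvs
    exact SimpleGraph.ConnectedComponent.exact (hus.trans hvs.symm)
  obtain ⟨p⟩ := hr
  have hsupp : ∀ w ∈ p.support, w ∈ c.supp := by
    intro w hw
    have := reachable_of_mem_support p w hw
    rw [SimpleGraph.ConnectedComponent.mem_supp_iff] at hus ⊢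
    rw [← hus]
    exact (SimpleGraph.ConnectedComponent.sound this).symm
  have hedges : ∀ e ∈ p.edges,
      e ∈ (SimpleGraph.fromEdgeSet (↑(compEdges B c) : Set (Sym2 V))).edgeSet := by
    intro e he
    have heB : e ∈ (↑B : Set (Sym2 V)) := mem_of_walk_edges he
    have hnd : ¬ e.IsDiag := T.not_isDiag_of_mem_edgeSet (hB heB)
    rw [edgeSet_fromEdgeSet]
    refine ⟨?_, hnd⟩
    rw [Finset.mem_coe, compEdges, Finset.mem_filter]
    refine ⟨heB, ?_⟩
    intro w hwe
    induction e with
    | h x y =>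
      have hx : x ∈ p.support := p.fst_mem_support_of_mem_edges he
      have hy : y ∈ p.support := p.snd_mem_support_of_mem_edges he
      rcases Sym2.mem_iff.1 hwe with rfl | rfl
      · exact hsupp w hx
      · exact hsupp w hy
  exact ⟨p.transfer _ hedges⟩

lemma isSubtreeSet_compEdges [Fintype V] {T : SimpleGraph V} {B : Finset (Sym2 V)}
    (hB : (↑B : Set (Sym2 V)) ⊆ T.edgeSet)
    (c : (SimpleGraph.fromEdgeSet (↑B : Set (Sym2 V))).ConnectedComponent)
    (hne : (↑(compEdges B c) : Set (Sym2 V)).Nonempty) :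
    IsSubtreeSet T (↑(compEdges B c) : Set (Sym2 V)) := by
  classical
  refine ⟨hne, ?_, ?_⟩
  · intro e he
    rw [Finset.mem_coe, compEdges, Finset.mem_filter] at he
    exact hB he.1
  · rw [connected_iff]
    constructor
    · rintro ⟨u, hu⟩ ⟨v, hv⟩
      exact induce_reachable epts_closed (compEdges_connected hB c hu hv) hu hv
    · obtain ⟨e, he⟩ := hne
      exact ⟨⟨e.out.1, e, he, Sym2.out_fst_mem e⟩⟩

end StmtAux
open SimpleGraph Finset

namespace StmtAux

variable {V : Type*}

open Classical in
lemma compEdges_card [Fintype V] {T : SimpleGraph V} (hT : T.IsTree) {B : Finset (Sym2 V)}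
    (hB : (↑B : Set (Sym2 V)) ⊆ T.edgeSet)
    (c : (SimpleGraph.fromEdgeSet (↑B : Set (Sym2 V))).ConnectedComponent) :
    (compEdges B c).card + 1 = c.supp.ncard := by
  classical
  let G := SimpleGraph.fromEdgeSet (↑B : Set (Sym2 V))
  let Gc := G.induce c.supp
  haveI : Fintype ↥c.supp := Fintype.ofFinite _
  haveI : Fintype Gc.edgeSet := Fintype.ofFinite _
  have hconn : Gc.Connected := by
    rw [connected_iff]
    constructor
    · rintro ⟨u, hu⟩ ⟨v, hv⟩
      have hr : G.Reachable u v := by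
        rw [SimpleGraph.ConnectedComponent.mem_supp_iff] at hu hv
        exact SimpleGraph.ConnectedComponent.exact (hu.trans hv.symm)
      exact induce_reachable supp_closed hr hu hv
    · obtain ⟨v, hv⟩ := c.exists_rep
      exact ⟨⟨v, by rw [SimpleGraph.ConnectedComponent.mem_supp_iff]; exact hv⟩⟩
  have hacyc : Gc.IsAcyclic := by
    intro x w hcyc
    have hle : G ≤ T := fromEdgeSet_le hB
    let f : Gc →g T :=
      (SimpleGraph.Hom.ofLE hle).comp (SimpleGraph.Embedding.induce c.supp).toHom
    have hinj : Function.Injective ⇑f := fun p q hpq => Subtype.ext hpq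
    exact hT.IsAcyclic (w.map f) (hcyc.map hinj)
  have hTree : Gc.IsTree := ⟨hconn, hacyc⟩
  have h1 := hTree.card_edgeFinset
  have h2 : Fintype.card ↥c.supp = c.supp.ncard := by
    rw [← Nat.card_eq_fintype_card, Nat.card_coe_set_eq]
  have h3 : compEdges B c = Gc.edgeFinset.image (Sym2.map (Subtype.val)) := by
    ext e
    constructor
    · intro he
      simp only [compEdges, Finset.mem_filter] at he
      obtain ⟨heB, hsupp⟩ := he
      induction e with
      | h x y =>
        have hx : x ∈ c.supp := hsupp x (Sym2.mem_mk_left x y)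
        have hy : y ∈ c.supp := hsupp y (Sym2.mem_mk_right x y)
        have hxy : x ≠ y := by
          have := T.not_isDiag_of_mem_edgeSet (hB heB)
          simpa [Sym2.mk_isDiag_iff] using this
        refine Finset.mem_image.2 ⟨s(⟨x, hx⟩, ⟨y, hy⟩), ?_, ?_⟩
        · rw [SimpleGraph.mem_edgeFinset]
          have hadj : G.Adj x y := by
            rw [SimpleGraph.fromEdgeSet_adj]
            exact ⟨heB, hxy⟩
          exact hadj
        · rw [Sym2.map_pair_eq]
    · intro he
      obtain ⟨ebar, hebar, rfl⟩ := Finset.mem_image.1 he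
      induction ebar with
      | h p q =>
        rw [SimpleGraph.mem_edgeFinset] at hebar
        have hadj : G.Adj ↑p ↑q := hebar
        rw [SimpleGraph.fromEdgeSet_adj] at hadj
        simp only [Sym2.map_pair_eq, compEdges, Finset.mem_filter]
        refine ⟨hadj.1, ?_⟩
        intro v hv
        rcases Sym2.mem_iff.1 hv with rfl | rfl
        · exact p.2
        · exact q.2
  have h4 : (compEdges B c).card = Gc.edgeFinset.card := by
    rw [h3, Finset.card_image_of_injective _ (Sym2.map.injective Subtype.val_injective)]
  rw [h4, h1, h2]

open Classical in
lemma sum_compEdges_card [Fintype V] {T : SimpleGraph V} {B : Finset (Sym2 V)}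
    (hB : (↑B : Set (Sym2 V)) ⊆ T.edgeSet) :
    ∑ c ∈ comps B, (compEdges B c).card = B.card := by
  classical
  have h := Finset.card_eq_sum_card_fiberwise
    (f := fun e => (SimpleGraph.fromEdgeSet (↑B : Set (Sym2 V))).connectedComponentMk
      (e.out).1)
    (s := B) (t := comps B) (fun e _ => mem_comps B _)
  rw [h]
  refine Finset.sum_congr rfl fun c _ => ?_
  congr 1
  ext e
  simp only [compEdges, Finset.mem_filter]
  refine and_congr_right fun heB => ?_
  have heq : s((e.out).1, (e.out).2) = e := by
    show Sym2.mk _ _ = e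
    rw [Sym2.mk, Prod.mk.eta]
    exact Quot.out_eq e
  have hxy : (SimpleGraph.fromEdgeSet (↑B : Set (Sym2 V))).connectedComponentMk (e.out).1
      = (SimpleGraph.fromEdgeSet (↑B : Set (Sym2 V))).connectedComponentMk (e.out).2 := by
    apply SimpleGraph.ConnectedComponent.connectedComponentMk_eq_of_adj
    rw [SimpleGraph.fromEdgeSet_adj]
    constructor
    · rw [heq]; exact heB
    · intro h
      have hnd := T.not_isDiag_of_mem_edgeSet (hB heB)
      exact hnd (by rw [← heq]; exact Sym2.mk_isDiag_iff.2 h)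
  constructor
  · intro hs
    have := hs (e.out).1 (Sym2.out_fst_mem e)
    rwa [SimpleGraph.ConnectedComponent.mem_supp_iff] at this
  · intro hc v hv
    rw [← heq] at hv
    rw [SimpleGraph.ConnectedComponent.mem_supp_iff]
    rcases Sym2.mem_iff.1 hv with rfl | rfl
    · exact hc
    · rw [← hxy]; exact hc

lemma comps_card [Fintype V] {T : SimpleGraph V} (hT : T.IsTree) {B : Finset (Sym2 V)}
    (hB : (↑B : Set (Sym2 V)) ⊆ T.edgeSet) :
    (comps B).card + B.card = Fintype.card V := by
  classical
  have h1 := sum_supp_ncard B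
  have h2 := sum_compEdges_card (T := T) hB
  have h3 : ∑ c ∈ comps B, c.supp.ncard
      = ∑ c ∈ comps B, ((compEdges B c).card + 1) :=
    Finset.sum_congr rfl fun c _ => (compEdges_card hT hB c).symm
  rw [h3, Finset.sum_add_distrib, Finset.sum_const, smul_eq_mul, mul_one, h2] at h1
  omega

end StmtAux
open SimpleGraph Finset

namespace StmtAux

variable {V : Type*}

open Classical in
lemma countA [Fintype V] {T : SimpleGraph V} (hT : T.IsTree) {B : Finset (Sym2 V)}
    (hB : (↑B : Set (Sym2 V)) ⊆ T.edgeSet) {a : ℕ} (ha : 1 ≤ a) :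
    ((Finset.univ : Finset (Sym2 V)).powerset.filter
      (fun (A : Finset (Sym2 V)) => A.Nonempty ∧ (↑A : Set (Sym2 V)) ⊆ T.edgeSet ∧ A.card = a ∧
        (↑A : Set (Sym2 V)) ⊆ (↑B : Set (Sym2 V)) ∧
        connector T (↑A : Set (Sym2 V)) ⊆ (↑B : Set (Sym2 V)))).card
    = ∑ c ∈ comps B, ((compEdges B c).card.choose a) := by
  classical
  have hset : (Finset.univ : Finset (Sym2 V)).powerset.filter
      (fun (A : Finset (Sym2 V)) => A.Nonempty ∧ (↑A : Set (Sym2 V)) ⊆ T.edgeSet ∧ A.card = a ∧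
        (↑A : Set (Sym2 V)) ⊆ (↑B : Set (Sym2 V)) ∧
        connector T (↑A : Set (Sym2 V)) ⊆ (↑B : Set (Sym2 V)))
      = (comps B).biUnion (fun c => Finset.powersetCard a (compEdges B c)) := by
    ext A
    simp only [Finset.mem_filter, Finset.mem_powerset, Finset.mem_biUnion,
      Finset.mem_powersetCard]
    constructor
    · rintro ⟨-, hAne, hAes, hAcard, hAB, hKB⟩
      have hAneS : (↑A : Set (Sym2 V)).Nonempty := by
        obtain ⟨e, he⟩ := hAne; exact ⟨e, he⟩
      have hfam := connector_mem_fam hT hAneS hAes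
      have hsubtree : IsSubtreeSet T ((↑A : Set (Sym2 V)) ∪ connector T ↑A) := hfam.2
      have hSB : ((↑A : Set (Sym2 V)) ∪ connector T ↑A) ⊆ (↑B : Set (Sym2 V)) :=
        Set.union_subset hAB hKB
      obtain ⟨e₀, he₀⟩ := hAne
      refine ⟨(SimpleGraph.fromEdgeSet (↑B : Set (Sym2 V))).connectedComponentMk e₀.out.1,
        mem_comps B _, ?_, hAcard⟩
      intro e heA
      simp only [compEdges, Finset.mem_filter]
      refine ⟨hAB heA, ?_⟩
      intro v hv
      have hvS : v ∈ epts ((↑A : Set (Sym2 V)) ∪ connector T ↑A) :=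
        ⟨e, Or.inl heA, hv⟩
      have hxS : e₀.out.1 ∈ epts ((↑A : Set (Sym2 V)) ∪ connector T ↑A) :=
        ⟨e₀, Or.inl he₀, Sym2.out_fst_mem e₀⟩
      have hre := subtree_reachable hsubtree hvS hxS
      have hre2 : (SimpleGraph.fromEdgeSet (↑B : Set (Sym2 V))).Reachable v e₀.out.1 :=
        hre.mono (SimpleGraph.fromEdgeSet_mono hSB)
      rw [SimpleGraph.ConnectedComponent.mem_supp_iff]
      exact SimpleGraph.ConnectedComponent.sound hre2
    · rintro ⟨c, -, hsub, hcard⟩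
      have hEB : compEdges B c ⊆ B := Finset.filter_subset _ _
      have hABfin : A ⊆ B := hsub.trans hEB
      have hAne : A.Nonempty := Finset.card_pos.1 (by omega)
      have hAneS : (↑A : Set (Sym2 V)).Nonempty := by
        obtain ⟨e, he⟩ := hAne; exact ⟨e, he⟩
      have hAes : (↑A : Set (Sym2 V)) ⊆ T.edgeSet :=
        fun e he => hB (hABfin he)
      refine ⟨Finset.subset_univ A, hAne, hAes, hcard, fun e he => hABfin he, ?_⟩
      have hBfam : ((↑(compEdges B c) : Set (Sym2 V)) \ (↑A : Set (Sym2 V)))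
          ∈ Fam T (↑A : Set (Sym2 V)) := by
        constructor
        · rintro e ⟨he1, he2⟩
          exact ⟨hB (hEB he1), he2⟩
        · have hcup : (↑A : Set (Sym2 V)) ∪
              ((↑(compEdges B c) : Set (Sym2 V)) \ (↑A : Set (Sym2 V)))
              = (↑(compEdges B c) : Set (Sym2 V)) :=
            Set.union_diff_cancel (fun e he => hsub he)
          rw [hcup]
          exact isSubtreeSet_compEdges hB c (hAneS.mono (fun e he => hsub he))
      have h1 := connector_subset_of_mem hBfam
      intro e he
      have := h1 he
      exact hEB this.1
  rw [hset]
  rw [Finset.card_biUnion]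
  · exact Finset.sum_congr rfl fun c _ => Finset.card_powersetCard a _
  · intro c1 h1 c2 h2 hne
    rw [Function.onFun, Finset.disjoint_left]
    intro A hA1 hA2
    rw [Finset.mem_powersetCard] at hA1 hA2
    have hAne : A.Nonempty := Finset.card_pos.1 (by omega)
    obtain ⟨e, he⟩ := hAne
    have hx1 := (Finset.mem_filter.1 (hA1.1 he)).2 e.out.1 (Sym2.out_fst_mem e)
    have hx2 := (Finset.mem_filter.1 (hA2.1 he)).2 e.out.1 (Sym2.out_fst_mem e)
    rw [SimpleGraph.ConnectedComponent.mem_supp_iff] at hx1 hx2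
    exact hne (hx1 ▸ hx2 ▸ rfl)

end StmtAux
namespace StmtAux

lemma chooseInt_neg {p : ℕ} {q : ℤ} (h : q < 0) : chooseInt p q = 0 := if_neg (not_le.2 h)

lemma chooseInt_nat (p m : ℕ) : chooseInt p (m : ℤ) = (p.choose m : ℤ) := by
  rw [chooseInt, if_pos (by positivity), Int.toNat_natCast]

lemma binom_aux (N : ℕ) (r : ℤ) :
    ∑ j ∈ Finset.range (N + 1), (-1 : ℤ) ^ j * (N.choose j : ℤ) * chooseInt (N - j) (r - j)
      = if r = 0 then 1 else 0 := by
  by_cases hr : r < 0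
  · rw [if_neg (by omega)]
    refine Finset.sum_eq_zero fun j _ => ?_
    rw [chooseInt_neg (by omega), mul_zero]
  push_neg at hr
  obtain ⟨m, rfl⟩ := Int.eq_ofNat_of_zero_le hr
  rcases Nat.eq_zero_or_pos m with rfl | hm
  · rw [if_pos (by norm_num)]
    rw [Finset.sum_eq_single 0]
    · norm_num [chooseInt]
    · intro j hj hj0
      rw [chooseInt_neg (by omega), mul_zero]
    · intro h; exact absurd (Finset.mem_range.2 (by omega)) h
  · rw [if_neg (by exact_mod_cast (by omega : ¬ m = 0))]
    have hterm : ∀ j ∈ Finset.range (N + 1),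
        (-1 : ℤ) ^ j * (N.choose j : ℤ) * chooseInt (N - j) ((m : ℤ) - j)
          = (N.choose m : ℤ) * ((-1 : ℤ) ^ j * (m.choose j : ℤ)) := by
      intro j hj
      rw [Finset.mem_range] at hj
      by_cases hjm : j ≤ m
      · have h1 : ((m : ℤ) - j) = ((m - j : ℕ) : ℤ) := by push_cast; omega
        rw [h1, chooseInt_nat]
        by_cases hmN : m ≤ N
        · have hcm := Nat.choose_mul (n := N) (k := m) (s := j) hjm
          have hcm' : (N.choose j : ℤ) * ((N - j).choose (m - j) : ℤ)
              = (N.choose m : ℤ) * (m.choose j : ℤ) := by exact_mod_cast hcm.symm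
          calc (-1 : ℤ) ^ j * (N.choose j : ℤ) * ((N - j).choose (m - j) : ℤ)
              = (-1 : ℤ) ^ j * ((N.choose j : ℤ) * ((N - j).choose (m - j) : ℤ)) := by ring
            _ = (-1 : ℤ) ^ j * ((N.choose m : ℤ) * (m.choose j : ℤ)) := by rw [hcm']
            _ = (N.choose m : ℤ) * ((-1 : ℤ) ^ j * (m.choose j : ℤ)) := by ring
        · have h0 : (N - j).choose (m - j) = 0 := Nat.choose_eq_zero_of_lt (by omega)
          have h0' : N.choose m = 0 := Nat.choose_eq_zero_of_lt (by omega)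
          rw [h0, h0']; push_cast; ring
      · have h2 : chooseInt (N - j) ((m : ℤ) - j) = 0 := chooseInt_neg (by omega)
        have h3 : m.choose j = 0 := Nat.choose_eq_zero_of_lt (by omega)
        rw [h2, h3]; push_cast; ring
    rw [Finset.sum_congr rfl hterm, ← Finset.mul_sum]
    by_cases hmN : m ≤ N
    · have hsub : Finset.range (m + 1) ⊆ Finset.range (N + 1) := by
        intro j hj; rw [Finset.mem_range] at *; omega
      rw [← Finset.sum_subset hsub (fun j hj hj2 => by
        have h3 : m.choose j = 0 := by
          rw [Finset.mem_range] at hj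
          rw [Finset.mem_range] at hj2
          exact Nat.choose_eq_zero_of_lt (by omega)
        rw [h3]; push_cast; ring)]
      rw [Int.alternating_sum_range_choose, if_neg (by omega), mul_zero]
    · have h4 : N.choose m = 0 := Nat.choose_eq_zero_of_lt (by omega)
      rw [h4]; push_cast; ring

lemma sum_superset_reindex {α : Type*} [DecidableEq α] (S E : Finset α) (hSE : S ⊆ E)
    (f : Finset α → ℤ) :
    ∑ B ∈ E.powerset.filter (fun B => S ⊆ B), f B
      = ∑ C ∈ (E \ S).powerset, f (S ∪ C) := by
  refine Finset.sum_nbij' (i := fun B => B \ S) (j := fun C => S ∪ C) ?_ ?_ ?_ ?_ ?_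
  · intro B hB
    rw [Finset.mem_filter, Finset.mem_powerset] at hB
    rw [Finset.mem_powerset]
    exact Finset.sdiff_subset_sdiff hB.1 subset_rfl
  · intro C hC
    rw [Finset.mem_powerset] at hC
    rw [Finset.mem_filter, Finset.mem_powerset]
    exact ⟨Finset.union_subset hSE (hC.trans (Finset.sdiff_subset)), Finset.subset_union_left⟩
  · intro B hB
    rw [Finset.mem_filter] at hB
    exact Finset.union_sdiff_of_subset hB.2
  · intro C hC
    rw [Finset.mem_powerset] at hC
    refine Finset.union_sdiff_cancel_left ?_
    exact Finset.disjoint_left.2 fun x hxS hxC => (Finset.mem_sdiff.1 (hC hxC)).2 hxS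
  · intro B hB
    rw [Finset.mem_filter] at hB
    rw [Finset.union_sdiff_of_subset hB.2]

end StmtAux

open SimpleGraph Finset

namespace StmtAux

variable {V : Type*}

open Classical in
lemma edgeSetType_def [Fintype V] (B : Finset (Sym2 V)) :
    edgeSetType B = (comps B).val.map (fun c => c.supp.ncard) := rfl

lemma edgeSetType_card [Fintype V] (B : Finset (Sym2 V)) :
    Multiset.card (edgeSetType B) = (comps B).card := by
  rw [edgeSetType_def, Multiset.card_map]
  rfl

lemma edgeSetType_sum [Fintype V] (B : Finset (Sym2 V)) :
    (edgeSetType B).sum = Fintype.card V := by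
  rw [edgeSetType_def]
  exact sum_supp_ncard B

lemma edgeSetType_map_sum [Fintype V] (B : Finset (Sym2 V)) (g : ℕ → ℤ) :
    ((edgeSetType B).map g).sum = ∑ c ∈ comps B, g c.supp.ncard := by
  rw [edgeSetType_def, Multiset.map_map]
  rfl

lemma edgeSetType_pos [Fintype V] (B : Finset (Sym2 V)) :
    ∀ i ∈ edgeSetType B, 0 < i := by
  rw [edgeSetType_def]
  intro i hi
  obtain ⟨c, _, rfl⟩ := Multiset.mem_map.1 hi
  obtain ⟨v, hv⟩ := c.exists_rep
  exact (Set.ncard_pos (Set.toFinite _)).2 ⟨v, by rwa [SimpleGraph.ConnectedComponent.mem_supp_iff]⟩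

open Classical in
noncomputable def partOf [Fintype V] (B : Finset (Sym2 V)) : (Fintype.card V).Partition :=
  ⟨edgeSetType B, fun hi => edgeSetType_pos B _ hi, edgeSetType_sum B⟩

lemma partOf_parts [Fintype V] (B : Finset (Sym2 V)) : (partOf B).parts = edgeSetType B := rfl

end StmtAux


open StmtAux in
open Classical in
/-- Let `T` be a tree with `n` vertices and let `a ≥ 1`, `b ≥ 0`.  Then the number of nonempty
subsets `A ⊆ E(T)` with `#A = a` and `#K(A) = b` equals `Σ_{λ ⊢ n} ψ(λ,a,b)·c_λ(T)`. -/
theorem stmt_8 [Fintype V] (T : SimpleGraph V) (hT : T.IsTree)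
    (a b : ℕ) (ha : 1 ≤ a) :
    (((Finset.univ : Finset (Sym2 V)).powerset.filter
        (fun (A : Finset (Sym2 V)) => A.Nonempty ∧ (↑A : Set (Sym2 V)) ⊆ T.edgeSet ∧
          A.card = a ∧ (connector T (↑A : Set (Sym2 V))).ncard = b)).card : ℤ) =
      ∑ p : (Fintype.card V).Partition,
        psi (Fintype.card V) p.parts a b * cCoeff T p.parts := by
  classical
  set n := Fintype.card V with hn
  have hVne : Nonempty V := hT.isConnected.nonempty
  have hn1 : 1 ≤ n := Fintype.card_pos
  set ET := T.edgeFinset with hET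
  have hETcoe : (↑ET : Set (Sym2 V)) = T.edgeSet := T.coe_edgeFinset
  have hETcard : ET.card + 1 = n := hT.card_edgeFinset
  -- the collection of candidate sets A
  set 𝒜 := (Finset.univ : Finset (Sym2 V)).powerset.filter
    (fun (A : Finset (Sym2 V)) => A.Nonempty ∧ (↑A : Set (Sym2 V)) ⊆ T.edgeSet ∧ A.card = a)
    with h𝒜
  -- STEP A --------------------------------------------------------------
  have stepA : ∑ p : n.Partition, psi n p.parts a b * cCoeff T p.parts
      = ∑ B ∈ ET.powerset, (-1 : ℤ) ^ B.card * psi n (edgeSetType B) a b := by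
    have h1 : ∀ p : n.Partition, psi n p.parts a b * cCoeff T p.parts
        = ∑ B ∈ (Finset.univ : Finset (Sym2 V)).powerset,
            (if ((↑B : Set (Sym2 V)) ⊆ T.edgeSet ∧ edgeSetType B = p.parts)
              then (-1 : ℤ) ^ B.card * psi n p.parts a b else 0) := by
      intro p
      rw [cCoeff, Finset.mul_sum]
      refine Finset.sum_congr rfl fun B _ => ?_
      split_ifs <;> ring
    rw [Finset.sum_congr rfl (fun p _ => h1 p), Finset.sum_comm]
    have h2 : ∀ B ∈ (Finset.univ : Finset (Sym2 V)).powerset,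
        (∑ p : n.Partition, if ((↑B : Set (Sym2 V)) ⊆ T.edgeSet ∧ edgeSetType B = p.parts)
            then (-1 : ℤ) ^ B.card * psi n p.parts a b else 0)
        = if (↑B : Set (Sym2 V)) ⊆ T.edgeSet
            then (-1 : ℤ) ^ B.card * psi n (edgeSetType B) a b else 0 := by
      intro B _
      by_cases hBE : (↑B : Set (Sym2 V)) ⊆ T.edgeSet
      · rw [if_pos hBE, Finset.sum_eq_single (partOf B)]
        · rw [if_pos ⟨hBE, (partOf_parts B).symm⟩, partOf_parts]
        · intro q _ hq
          rw [if_neg]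
          rintro ⟨-, hq2⟩
          exact hq (Nat.Partition.ext (hq2.symm.trans (partOf_parts B).symm))
        · intro h; exact absurd (Finset.mem_univ _) h
      · rw [if_neg hBE]
        exact Finset.sum_eq_zero fun p _ => if_neg (fun h => hBE h.1)
    rw [Finset.sum_congr rfl h2, ← Finset.sum_filter]
    congr 1
    ext B
    simp only [Finset.mem_filter, Finset.mem_powerset, Finset.subset_univ, true_and]
    rw [← hETcoe, Finset.coe_subset]
  -- STEP B --------------------------------------------------------------
  have stepB : ∀ B ∈ ET.powerset, (-1 : ℤ) ^ B.card * psi n (edgeSetType B) a b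
      = (-1 : ℤ) ^ (a + b) * ((-1 : ℤ) ^ B.card *
          chooseInt (n - 1 - B.card) ((a : ℤ) + b - B.card)) *
        (((Finset.univ : Finset (Sym2 V)).powerset.filter
          (fun (A : Finset (Sym2 V)) => A.Nonempty ∧ (↑A : Set (Sym2 V)) ⊆ T.edgeSet ∧
            A.card = a ∧ (↑A : Set (Sym2 V)) ⊆ (↑B : Set (Sym2 V)) ∧
            connector T (↑A : Set (Sym2 V)) ⊆ (↑B : Set (Sym2 V)))).card : ℤ) := by
    intro B hBp
    rw [Finset.mem_powerset] at hBp
    have hBE : (↑B : Set (Sym2 V)) ⊆ T.edgeSet := by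
      rw [← hETcoe]; exact Finset.coe_subset.2 hBp
    have hℓ := comps_card hT hBE
    have hBcard : B.card ≤ n - 1 := by
      have := Finset.card_le_card hBp; omega
    rw [psi]
    have e1 : Multiset.card (edgeSetType B) = (comps B).card := edgeSetType_card B
    have e2 : Multiset.card (edgeSetType B) - 1 = n - 1 - B.card := by rw [e1]; omega
    have e3 : ((Multiset.card (edgeSetType B) : ℤ)) - n + a + b = (a : ℤ) + b - B.card := by
      rw [e1]
      have : ((comps B).card : ℤ) = (n : ℤ) - B.card := by
        have : (comps B).card + B.card = n := hℓ
        push_cast [← this]; ring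
      rw [this]; ring
    have e4 : ((edgeSetType B).map (fun m => ((m - 1).choose a : ℤ))).sum
        = (((Finset.univ : Finset (Sym2 V)).powerset.filter
            (fun (A : Finset (Sym2 V)) => A.Nonempty ∧ (↑A : Set (Sym2 V)) ⊆ T.edgeSet ∧
              A.card = a ∧ (↑A : Set (Sym2 V)) ⊆ (↑B : Set (Sym2 V)) ∧
              connector T (↑A : Set (Sym2 V)) ⊆ (↑B : Set (Sym2 V)))).card : ℤ) := by
      rw [edgeSetType_map_sum]
      have h5 : ∀ c ∈ comps B, ((c.supp.ncard - 1).choose a : ℤ)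
          = ((compEdges B c).card.choose a : ℤ) := by
        intro c _
        have := compEdges_card hT hBE c
        have h6 : c.supp.ncard - 1 = (compEdges B c).card := by omega
        rw [h6]
      rw [Finset.sum_congr rfl h5, ← Nat.cast_sum, ← countA hT hBE ha]
    rw [e2, e3, e4]
    ring
  -- STEP C: express the count as a sum of indicators over 𝒜 ------------
  have stepC : ∀ B : Finset (Sym2 V),
      (((Finset.univ : Finset (Sym2 V)).powerset.filter
          (fun (A : Finset (Sym2 V)) => A.Nonempty ∧ (↑A : Set (Sym2 V)) ⊆ T.edgeSet ∧
            A.card = a ∧ (↑A : Set (Sym2 V)) ⊆ (↑B : Set (Sym2 V)) ∧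
            connector T (↑A : Set (Sym2 V)) ⊆ (↑B : Set (Sym2 V)))).card : ℤ)
      = ∑ A ∈ 𝒜, (if ((↑A : Set (Sym2 V)) ⊆ (↑B : Set (Sym2 V)) ∧
          connector T (↑A : Set (Sym2 V)) ⊆ (↑B : Set (Sym2 V))) then (1 : ℤ) else 0) := by
    intro B
    rw [Finset.sum_boole, h𝒜, Finset.filter_filter]
    congr 2
    apply Finset.filter_congr
    intro A _
    tauto
  -- combine A, B, C and swap the summation order ------------------------
  rw [stepA, Finset.sum_congr rfl stepB]
  have hswap : ∑ B ∈ ET.powerset, (-1 : ℤ) ^ (a + b) * ((-1 : ℤ) ^ B.card *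
          chooseInt (n - 1 - B.card) ((a : ℤ) + b - B.card)) *
        (((Finset.univ : Finset (Sym2 V)).powerset.filter
          (fun (A : Finset (Sym2 V)) => A.Nonempty ∧ (↑A : Set (Sym2 V)) ⊆ T.edgeSet ∧
            A.card = a ∧ (↑A : Set (Sym2 V)) ⊆ (↑B : Set (Sym2 V)) ∧
            connector T (↑A : Set (Sym2 V)) ⊆ (↑B : Set (Sym2 V)))).card : ℤ)
      = ∑ A ∈ 𝒜, ∑ B ∈ ET.powerset,
          (if ((↑A : Set (Sym2 V)) ⊆ (↑B : Set (Sym2 V)) ∧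
              connector T (↑A : Set (Sym2 V)) ⊆ (↑B : Set (Sym2 V)))
            then (-1 : ℤ) ^ (a + b) * ((-1 : ℤ) ^ B.card *
              chooseInt (n - 1 - B.card) ((a : ℤ) + b - B.card)) else 0) := by
    rw [← Finset.sum_comm]
    refine Finset.sum_congr rfl fun B _ => ?_
    rw [stepC B, Finset.mul_sum]
    refine Finset.sum_congr rfl fun A _ => ?_
    split_ifs <;> ring
  rw [hswap]
  -- STEP D: evaluate the inner sum for each A ---------------------------
  have stepD : ∀ A ∈ 𝒜, (∑ B ∈ ET.powerset,
      (if ((↑A : Set (Sym2 V)) ⊆ (↑B : Set (Sym2 V)) ∧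
          connector T (↑A : Set (Sym2 V)) ⊆ (↑B : Set (Sym2 V)))
        then (-1 : ℤ) ^ (a + b) * ((-1 : ℤ) ^ B.card *
          chooseInt (n - 1 - B.card) ((a : ℤ) + b - B.card)) else 0))
      = if (connector T (↑A : Set (Sym2 V))).ncard = b then 1 else 0 := by
    intro A hA
    rw [h𝒜, Finset.mem_filter] at hA
    obtain ⟨-, hAne, hAes, hAca⟩ := hA
    have hAneS : (↑A : Set (Sym2 V)).Nonempty := by
      obtain ⟨e, he⟩ := hAne; exact ⟨e, he⟩
    have hfam := connector_mem_fam hT hAneS hAes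
    have hKfin : (connector T (↑A : Set (Sym2 V))).Finite := Set.toFinite _
    set KF := hKfin.toFinset with hKF
    set k := KF.card with hk
    have hncard : (connector T (↑A : Set (Sym2 V))).ncard = k :=
      Set.ncard_eq_toFinset_card _ hKfin
    have hdisj : Disjoint A KF := by
      rw [Finset.disjoint_left]
      intro e heA heK
      rw [hKF, Set.Finite.mem_toFinset] at heK
      exact (hfam.1 heK).2 heA
    set SA := A ∪ KF with hSA
    have hSAcard : SA.card = a + k := by
      rw [hSA, Finset.card_union_of_disjoint hdisj, hAca]
    have hKFET : KF ⊆ ET := by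
      intro e he
      rw [hKF, Set.Finite.mem_toFinset] at he
      rw [hET, SimpleGraph.mem_edgeFinset]
      exact (hfam.1 he).1
    have hAET : A ⊆ ET := by
      intro e he
      rw [hET, SimpleGraph.mem_edgeFinset]
      exact hAes he
    have hSAET : SA ⊆ ET := Finset.union_subset hAET hKFET
    have hcond : ∀ B : Finset (Sym2 V),
        ((↑A : Set (Sym2 V)) ⊆ (↑B : Set (Sym2 V)) ∧
          connector T (↑A : Set (Sym2 V)) ⊆ (↑B : Set (Sym2 V))) ↔ SA ⊆ B := by
      intro B
      rw [hSA, Finset.union_subset_iff, Finset.coe_subset, hKF, Set.Finite.toFinset_subset]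
    have htrans1 : (∑ B ∈ ET.powerset,
        (if ((↑A : Set (Sym2 V)) ⊆ (↑B : Set (Sym2 V)) ∧
            connector T (↑A : Set (Sym2 V)) ⊆ (↑B : Set (Sym2 V)))
          then (-1 : ℤ) ^ (a + b) * ((-1 : ℤ) ^ B.card *
            chooseInt (n - 1 - B.card) ((a : ℤ) + b - B.card)) else 0))
        = ∑ B ∈ ET.powerset.filter (fun B => SA ⊆ B),
            (-1 : ℤ) ^ (a + b) * ((-1 : ℤ) ^ B.card *
              chooseInt (n - 1 - B.card) ((a : ℤ) + b - B.card)) := by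
      rw [Finset.sum_filter]
      exact Finset.sum_congr rfl fun B _ => if_congr (hcond B) rfl rfl
    rw [htrans1, sum_superset_reindex SA ET hSAET]
    set D := ET \ SA with hD
    have hak : a + k ≤ n - 1 := by
      have h7 := Finset.card_le_card hSAET
      omega
    have hDcard : D.card = n - 1 - (a + k) := by
      rw [hD, Finset.card_sdiff_of_subset hSAET]
      omega
    have hcardU : ∀ C ∈ D.powerset, (SA ∪ C).card = (a + k) + C.card := by
      intro C hC
      rw [Finset.mem_powerset] at hC
      rw [Finset.card_union_of_disjoint (Finset.disjoint_left.2
        fun x hx hxC => (Finset.mem_sdiff.1 (hC hxC)).2 hx), hSAcard]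
    have htrans2 : ∑ C ∈ D.powerset, (-1 : ℤ) ^ (a + b) * ((-1 : ℤ) ^ (SA ∪ C).card *
          chooseInt (n - 1 - (SA ∪ C).card) ((a : ℤ) + b - (SA ∪ C).card))
        = ∑ j ∈ Finset.range (D.card + 1), (D.card.choose j : ℤ) *
            ((-1 : ℤ) ^ (a + b) * ((-1 : ℤ) ^ (a + k) * ((-1 : ℤ) ^ j *
              chooseInt (D.card - j) (((b : ℤ) - k) - j)))) := by
      rw [Finset.sum_congr rfl (fun C hC => by rw [hcardU C hC])]
      rw [Finset.sum_powerset]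
      refine Finset.sum_congr rfl fun j hj => ?_
      rw [Finset.mem_range] at hj
      have hcc : ∀ C ∈ Finset.powersetCard j D, ((a + k) + C.card) = ((a + k) + j) :=
        fun C hC => by rw [(Finset.mem_powersetCard.1 hC).2]
      rw [Finset.sum_congr rfl (fun C hC => by rw [hcc C hC])]
      rw [Finset.sum_const, Finset.card_powersetCard, nsmul_eq_mul]
      congr 1
      have hD1 : n - 1 - ((a + k) + j) = D.card - j := by omega
      have hD2 : (a : ℤ) + b - (((a + k) + j : ℕ) : ℤ) = ((b : ℤ) - k) - j := by
        push_cast; ring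
      rw [hD1, hD2, pow_add]
      ring
    rw [htrans2]
    have htrans3 : ∑ j ∈ Finset.range (D.card + 1), (D.card.choose j : ℤ) *
            ((-1 : ℤ) ^ (a + b) * ((-1 : ℤ) ^ (a + k) * ((-1 : ℤ) ^ j *
              chooseInt (D.card - j) (((b : ℤ) - k) - j))))
        = ((-1 : ℤ) ^ (a + b) * (-1 : ℤ) ^ (a + k)) *
            ∑ j ∈ Finset.range (D.card + 1), (-1 : ℤ) ^ j * (D.card.choose j : ℤ) *
              chooseInt (D.card - j) (((b : ℤ) - k) - j) := by
      rw [Finset.mul_sum]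
      exact Finset.sum_congr rfl fun j _ => by ring
    rw [htrans3, binom_aux]
    by_cases hkb : k = b
    · rw [if_pos (by rw [hkb]; ring), if_pos (by rw [hncard, hkb])]
      rw [hkb, ← pow_add, mul_one]
      exact Even.neg_one_pow ⟨a + b, by ring⟩
    · rw [if_neg (by intro h; apply hkb; omega), if_neg (by rw [hncard]; exact fun h => hkb h)]
      ring
  rw [Finset.sum_congr rfl stepD]
  -- final counting -------------------------------------------------------
  rw [Finset.sum_boole, h𝒜, Finset.filter_filter]
  congr 2
  apply Finset.filter_congr
  intro A _
  tauto
end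

section
/- Let T be a tree with n vertices, let F ⊆ E(T) be an edge set with type(F) = λ = (λ_1 ≥ … ≥ λ_ℓ), and let a ≥ 1 be an integer. Then the number of nonempty subsets A ⊆ E(T) with #A = a and A ∪ K(A) ⊆ F equals Σ_{k=1}^{ℓ} C(λ_k − 1, a), with the convention C(p,q) = 0 if q > p. -/
open SimpleGraph Finset

variable {V : Type*} {W : Type*}

open Classical in
noncomputable def tpath {T : SimpleGraph V} (hT : T.IsTree) (u v : V) : T.Walk u v :=
  (hT.existsUnique_path u v).choose

lemma tpath_isPath {T : SimpleGraph V} (hT : T.IsTree) (u v : V) : (tpath hT u v).IsPath :=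
  (hT.existsUnique_path u v).choose_spec.1

lemma tpath_unique {T : SimpleGraph V} (hT : T.IsTree) {u v : V} (p : T.Walk u v)
    (hp : p.IsPath) : p = tpath hT u v :=
  (hT.existsUnique_path u v).choose_spec.2 p hp

lemma tpath_edges_subset {T : SimpleGraph V} (hT : T.IsTree) {u v : V} (p : T.Walk u v) :
    (tpath hT u v).edges ⊆ p.edges := by
  classical
  rw [← tpath_unique hT p.bypass p.bypass_isPath]
  exact p.edges_bypass_subset

/-- the single edge `s(u,v)` of the tree is on the tree path from `u` to `v`. -/
lemma tpath_single_edge {T : SimpleGraph V} (hT : T.IsTree) {u v : V} (h : T.Adj u v) :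
    (tpath hT u v).edges = [s(u, v)] := by
  rw [← tpath_unique hT h.toWalk (by simp [SimpleGraph.Walk.isPath_iff_eq_nil, h.ne])]
  simp

lemma reachable_fromEdgeSet_of_walk {T : SimpleGraph V} {S : Set (Sym2 V)} {u v : V}
    (p : T.Walk u v) (hp : ∀ e ∈ p.edges, e ∈ S) : (SimpleGraph.fromEdgeSet S).Reachable u v := by
  refine ⟨p.transfer _ fun e he => ?_⟩
  rw [SimpleGraph.edgeSet_fromEdgeSet]
  exact ⟨hp e he, SimpleGraph.not_isDiag_of_mem_edgeSet T (p.edges_subset_edgeSet he)⟩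

lemma tpath_edges_mem_of_reachable {T : SimpleGraph V} (hT : T.IsTree) {S : Set (Sym2 V)}
    (hS : S ⊆ T.edgeSet) {u v : V} (h : (SimpleGraph.fromEdgeSet S).Reachable u v) :
    ∀ e ∈ (tpath hT u v).edges, e ∈ S := by
  obtain ⟨w⟩ := h
  have hw : ∀ e ∈ w.edges, e ∈ S := fun e he =>
    ((SimpleGraph.edgeSet_fromEdgeSet S ▸ w.edges_subset_edgeSet he) : e ∈ S \ _).1
  have := tpath_edges_subset hT (w.transfer T (fun e he => hS (hw e he)))
  rw [SimpleGraph.Walk.edges_transfer] at this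
  exact fun e he => hw e (this he)

lemma reachable_of_induce_reachable {G : SimpleGraph V} {s : Set V} {a b : s}
    (h : (G.induce s).Reachable a b) : G.Reachable a.val b.val :=
  h.map ⟨Subtype.val, fun h => h⟩

lemma walk_to_induce {T : SimpleGraph V} {U : Set (Sym2 V)} {u v : V}
    (p : T.Walk u v) (hp : ∀ e ∈ p.edges, e ∈ U) (hu : u ∈ {x | ∃ e ∈ U, x ∈ e})
    (hv : v ∈ {x | ∃ e ∈ U, x ∈ e}) :
    ((SimpleGraph.fromEdgeSet U).induce {x | ∃ e ∈ U, x ∈ e}).Reachable ⟨u, hu⟩ ⟨v, hv⟩ := by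
  induction p with
  | nil => exact SimpleGraph.Reachable.refl _
  | @cons u w v h q ih =>
    have he : s(u, w) ∈ U := hp _ (by simp)
    have hw : w ∈ {x | ∃ e ∈ U, x ∈ e} := ⟨s(u, w), he, by simp⟩
    have hadj : ((SimpleGraph.fromEdgeSet U).induce {x | ∃ e ∈ U, x ∈ e}).Adj ⟨u, hu⟩ ⟨w, hw⟩ := by
      simp only [SimpleGraph.comap_adj, SimpleGraph.fromEdgeSet_adj]
      exact ⟨he, h.ne⟩
    exact hadj.reachable.trans (ih (fun e he' => hp e (by simp [he'])) hw hv)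

noncomputable def pathClosure {T : SimpleGraph V} (hT : T.IsTree) (x : V)
    (A : Set (Sym2 V)) : Set (Sym2 V) :=
  A ∪ {e | ∃ w ∈ {v | ∃ e' ∈ A, v ∈ e'}, e ∈ (tpath hT x w).edges}

lemma pathClosure_subset_edgeSet {T : SimpleGraph V} (hT : T.IsTree) {x : V}
    {A : Set (Sym2 V)} (hA : A ⊆ T.edgeSet) : pathClosure hT x A ⊆ T.edgeSet := by
  rintro e (he | ⟨w, _, he⟩)
  · exact hA he
  · exact (tpath hT x w).edges_subset_edgeSet he

lemma pathClosure_isSubtree {T : SimpleGraph V} (hT : T.IsTree) {x : V}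
    {A : Set (Sym2 V)} (hA : A ⊆ T.edgeSet) (hx : x ∈ {v | ∃ e' ∈ A, v ∈ e'}) :
    IsSubtreeSet T (pathClosure hT x A) := by
  classical
  obtain ⟨e₀, he₀, hxe₀⟩ := hx
  set U := pathClosure hT x A with hU
  have hAU : A ⊆ U := Set.subset_union_left
  have hxU : x ∈ {v | ∃ e ∈ U, v ∈ e} := ⟨e₀, hAU he₀, hxe₀⟩
  refine ⟨⟨e₀, hAU he₀⟩, pathClosure_subset_edgeSet hT hA, ?_⟩
  have key : ∀ z (hz : z ∈ {v | ∃ e ∈ U, v ∈ e}),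
      ((SimpleGraph.fromEdgeSet U).induce {v | ∃ e ∈ U, v ∈ e}).Reachable ⟨x, hxU⟩ ⟨z, hz⟩ := by
    rintro z ⟨e, he, hze⟩
    rcases he with he | ⟨w, hwA, he⟩
    · -- `e ∈ A`, so `z` is an endpoint of an edge of `A`
      have hzA : z ∈ {v | ∃ e' ∈ A, v ∈ e'} := ⟨e, he, hze⟩
      exact walk_to_induce (tpath hT x z) (fun e' he' => Or.inr ⟨z, hzA, he'⟩) hxU _
    · -- `e` is an edge of the path from `x` to `w`
      obtain ⟨y, rfl⟩ := Sym2.mem_iff_exists.1 hze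
      have hzsupp : z ∈ (tpath hT x w).support :=
        (tpath hT x w).fst_mem_support_of_mem_edges he
      refine walk_to_induce ((tpath hT x w).takeUntil z hzsupp)
        (fun e' he' => Or.inr ⟨w, hwA, (tpath hT x w).edges_takeUntil_subset hzsupp he'⟩) hxU _
  have hne : Nonempty {v | ∃ e ∈ U, v ∈ e} := ⟨⟨x, hxU⟩⟩
  refine ⟨?_⟩
  rintro ⟨z, hz⟩ ⟨z', hz'⟩
  exact (key z hz).symm.trans (key z' hz')

lemma pathClosure_min {T : SimpleGraph V} (hT : T.IsTree) {x : V}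
    {A : Set (Sym2 V)} (hx : x ∈ {v | ∃ e' ∈ A, v ∈ e'})
    {B : Set (Sym2 V)} (hB : B ⊆ T.edgeSet \ A) (hAB : IsSubtreeSet T (A ∪ B)) :
    pathClosure hT x A \ A ⊆ B := by
  obtain ⟨hne, hsub, hconn⟩ := hAB
  rintro e ⟨(he | ⟨w, hwA, he⟩), heA⟩
  · exact absurd he heA
  · obtain ⟨ex, hex, hxex⟩ := hx
    obtain ⟨ew, hew, hwew⟩ := hwA
    have hx' : x ∈ {v | ∃ e ∈ A ∪ B, v ∈ e} := ⟨ex, Or.inl hex, hxex⟩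
    have hw' : w ∈ {v | ∃ e ∈ A ∪ B, v ∈ e} := ⟨ew, Or.inl hew, hwew⟩
    have hr := reachable_of_induce_reachable (hconn.preconnected ⟨x, hx'⟩ ⟨w, hw'⟩)
    have := tpath_edges_mem_of_reachable hT hsub hr e he
    rcases this with h | h
    · exact absurd h heA
    · exact h

lemma union_connector_eq {T : SimpleGraph V} (hT : T.IsTree) {x : V}
    {A : Set (Sym2 V)} (hA : A ⊆ T.edgeSet) (hx : x ∈ {v | ∃ e' ∈ A, v ∈ e'}) :
    A ∪ connector T A = pathClosure hT x A := by
  have hAU : A ⊆ pathClosure hT x A := Set.subset_union_left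
  have hB₀ : pathClosure hT x A \ A ∈ {B | B ⊆ T.edgeSet \ A ∧ IsSubtreeSet T (A ∪ B)} := by
    refine ⟨fun e he => ⟨pathClosure_subset_edgeSet hT hA he.1, he.2⟩, ?_⟩
    rw [Set.union_diff_cancel hAU]
    exact pathClosure_isSubtree hT hA hx
  have h1 : connector T A ⊆ pathClosure hT x A \ A := Set.sInter_subset_of_mem hB₀
  have h2 : pathClosure hT x A \ A ⊆ connector T A :=
    Set.subset_sInter fun B hB => pathClosure_min hT hx hB.1 hB.2
  rw [subset_antisymm h1 h2, Set.union_diff_cancel hAU]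

lemma key_iff {T : SimpleGraph V} (hT : T.IsTree) {F : Finset (Sym2 V)}
    (hF : (↑F : Set (Sym2 V)) ⊆ T.edgeSet) {A : Set (Sym2 V)} (hA : A ⊆ T.edgeSet)
    {x : V} (hx : x ∈ {v | ∃ e' ∈ A, v ∈ e'}) :
    A ∪ connector T A ⊆ (↑F : Set (Sym2 V)) ↔
      ∀ v ∈ {v | ∃ e' ∈ A, v ∈ e'}, (SimpleGraph.fromEdgeSet (↑F : Set (Sym2 V))).Reachable x v := by
  rw [union_connector_eq hT hA hx]
  constructor
  · intro h v hv
    exact reachable_fromEdgeSet_of_walk (tpath hT x v)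
      (fun e he => h (Or.inr ⟨v, hv, he⟩))
  · rintro h e (heA | ⟨w, hwA, he⟩)
    · -- single edge argument
      induction e with
      | h u v =>
        have hadj : T.Adj u v := hA heA
        have hu : u ∈ {v | ∃ e' ∈ A, v ∈ e'} := ⟨_, heA, by simp⟩
        have hv : v ∈ {v | ∃ e' ∈ A, v ∈ e'} := ⟨_, heA, by simp⟩
        have hr : (SimpleGraph.fromEdgeSet (↑F : Set (Sym2 V))).Reachable u v :=
          (h u hu).symm.trans (h v hv)
        have := tpath_edges_mem_of_reachable hT hF hr
        rw [tpath_single_edge hT hadj] at this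
        exact this _ (by simp)
    · exact tpath_edges_mem_of_reachable hT hF (h w hwA) e he

lemma walk_to_induce_supp {G : SimpleGraph V} {c : G.ConnectedComponent} {u v : V}
    (p : G.Walk u v) (hu : u ∈ c.supp) (hv : v ∈ c.supp) :
    (G.induce c.supp).Reachable ⟨u, hu⟩ ⟨v, hv⟩ := by
  induction p with
  | nil => exact SimpleGraph.Reachable.refl _
  | @cons u w v h q ih =>
    have hw : w ∈ c.supp := by
      rw [SimpleGraph.ConnectedComponent.mem_supp_iff] at hu ⊢
      exact (SimpleGraph.ConnectedComponent.connectedComponentMk_eq_of_adj h).symm.trans hu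
    have hadj : (G.induce c.supp).Adj ⟨u, hu⟩ ⟨w, hw⟩ := h
    exact hadj.reachable.trans (ih hw hv)

open Classical in
lemma component_isTree {T : SimpleGraph V} (hT : T.IsTree) {G : SimpleGraph V} (hGT : G ≤ T)
    (c : G.ConnectedComponent) : (G.induce c.supp).IsTree := by
  constructor
  · have hrep : ∃ v, v ∈ c.supp := by
      obtain ⟨v, hv⟩ := c.exists_rep
      exact ⟨v, by rwa [SimpleGraph.ConnectedComponent.mem_supp_iff]⟩
    obtain ⟨v₀, hv₀⟩ := hrep
    have : Nonempty c.supp := ⟨⟨v₀, hv₀⟩⟩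
    refine ⟨?_⟩
    rintro ⟨u, hu⟩ ⟨v, hv⟩
    have hr : G.Reachable u v := by
      rw [SimpleGraph.ConnectedComponent.mem_supp_iff] at hu hv
      exact SimpleGraph.ConnectedComponent.exact (hu.trans hv.symm)
    obtain ⟨p⟩ := hr
    exact walk_to_induce_supp p hu hv
  · apply SimpleGraph.isAcyclic_of_path_unique
    intro v w p q
    have hinj : Function.Injective
        ((SimpleGraph.Hom.ofLE hGT).comp
          (⟨Subtype.val, id⟩ : G.induce c.supp →g G)) := by
      intro a b hab
      exact Subtype.val_injective hab
    apply SimpleGraph.Path.map_injective hinj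
    apply hT.IsAcyclic.path_unique

open Classical in
lemma component_card_edges [Fintype V] {T : SimpleGraph V} (hT : T.IsTree)
    {F : Finset (Sym2 V)} (hF : (↑F : Set (Sym2 V)) ⊆ T.edgeSet)
    (c : (SimpleGraph.fromEdgeSet (↑F : Set (Sym2 V))).ConnectedComponent) :
    (F.filter (fun e => ∀ v ∈ e,
      (SimpleGraph.fromEdgeSet (↑F : Set (Sym2 V))).connectedComponentMk v = c)).card + 1
      = c.supp.ncard := by
  classical
  revert c
  set G := SimpleGraph.fromEdgeSet (↑F : Set (Sym2 V)) with hG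
  intro c
  have hGT : G ≤ T := by
    intro a b hab
    rw [hG, SimpleGraph.fromEdgeSet_adj] at hab
    exact (SimpleGraph.mem_edgeSet T).1 (hF hab.1)
  letI : Fintype c.supp := Fintype.ofFinite _
  letI : Fintype (G.induce c.supp).edgeSet := Fintype.ofFinite _
  have hcard := (component_isTree hT hGT c).card_edgeFinset
  have hbij : (G.induce c.supp).edgeFinset.card =
      (F.filter (fun e => ∀ v ∈ e, G.connectedComponentMk v = c)).card := by
    refine Finset.card_bij (fun e _ => Sym2.map Subtype.val e) ?_ ?_ ?_
    · intro e he
      rw [SimpleGraph.mem_edgeFinset] at he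
      induction e with
      | h u v =>
        rw [SimpleGraph.mem_edgeSet] at he
        have hadj : G.Adj u.val v.val := he
        have hadj2 : s(u.val, v.val) ∈ (↑F : Set (Sym2 V)) ∧ u.val ≠ v.val :=
          (SimpleGraph.fromEdgeSet_adj _).1 hadj
        rw [Finset.mem_filter]
        refine ⟨by exact_mod_cast hadj2.1, ?_⟩
        intro w hw
        simp only [Sym2.map_pair_eq, Sym2.mem_iff] at hw
        rcases hw with rfl | rfl
        · exact (SimpleGraph.ConnectedComponent.mem_supp_iff _ _).1 u.property
        · exact (SimpleGraph.ConnectedComponent.mem_supp_iff _ _).1 v.property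
    · intro e₁ h₁ e₂ h₂ h
      exact Sym2.map.injective Subtype.val_injective h
    · intro e he
      rw [Finset.mem_filter] at he
      obtain ⟨heF, hec⟩ := he
      induction e with
      | h u v =>
        have hu : u ∈ c.supp := by
          rw [SimpleGraph.ConnectedComponent.mem_supp_iff]
          exact hec u (by simp)
        have hv : v ∈ c.supp := by
          rw [SimpleGraph.ConnectedComponent.mem_supp_iff]
          exact hec v (by simp)
        have hne : u ≠ v := by
          have := SimpleGraph.not_isDiag_of_mem_edgeSet T (hF heF)
          simpa [Sym2.mk_isDiag_iff] using this
        have hadj : (G.induce c.supp).Adj ⟨u, hu⟩ ⟨v, hv⟩ := by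
          show G.Adj u v
          rw [hG, SimpleGraph.fromEdgeSet_adj]
          exact ⟨heF, hne⟩
        exact ⟨s(⟨u, hu⟩, ⟨v, hv⟩), by rwa [SimpleGraph.mem_edgeFinset, SimpleGraph.mem_edgeSet],
          by simp⟩
  rw [Set.ncard_eq_toFinset_card', Set.toFinset_card, ← hcard, hbij]

open Classical in
/-- Let `T` be a tree with `n` vertices, `F ⊆ E(T)` with `type(F) = λ`, and `a ≥ 1`.  Then the
number of nonempty subsets `A ⊆ E(T)` with `#A = a` and `A ∪ K(A) ⊆ F` equals
`Σ_{k=1}^{ℓ} C(λ_k − 1, a)`. -/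
theorem stmt_10 [Fintype V] (T : SimpleGraph V) (hT : T.IsTree)
    (F : Finset (Sym2 V)) (hF : (↑F : Set (Sym2 V)) ⊆ T.edgeSet)
    (lam : Multiset ℕ) (hlam : edgeSetType F = lam)
    (a : ℕ) (ha : 1 ≤ a) :
    ((Finset.univ : Finset (Sym2 V)).powerset.filter
        (fun (A : Finset (Sym2 V)) => A.Nonempty ∧ (↑A : Set (Sym2 V)) ⊆ T.edgeSet ∧
          A.card = a ∧
          (↑A : Set (Sym2 V)) ∪ connector T (↑A : Set (Sym2 V)) ⊆ (↑F : Set (Sym2 V)))).card =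
      (lam.map (fun m => (m - 1).choose a)).sum := by
  classical
  subst hlam
  unfold edgeSetType
  set G := SimpleGraph.fromEdgeSet (↑F : Set (Sym2 V)) with hG
  set comps := (Finset.univ : Finset V).image (fun v => G.connectedComponentMk v) with hcomps
  set Fc := fun (c : G.ConnectedComponent) =>
    F.filter (fun e => ∀ v ∈ e, G.connectedComponentMk v = c) with hFc
  have hset : ((Finset.univ : Finset (Sym2 V)).powerset.filter
        (fun (A : Finset (Sym2 V)) => A.Nonempty ∧ (↑A : Set (Sym2 V)) ⊆ T.edgeSet ∧
          A.card = a ∧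
          (↑A : Set (Sym2 V)) ∪ connector T (↑A : Set (Sym2 V)) ⊆ (↑F : Set (Sym2 V)))) =
      comps.biUnion (fun c => Finset.powersetCard a (Fc c)) := by
    ext A
    simp only [Finset.mem_filter, Finset.mem_powerset, Finset.subset_univ, true_and,
      Finset.mem_biUnion, Finset.mem_powersetCard, hcomps, Finset.mem_image, Finset.mem_univ,
      true_and]
    constructor
    · rintro ⟨hne, hAsub, hcard, hconn⟩
      obtain ⟨e₀, he₀⟩ := hne
      have hx : e₀.out.1 ∈ e₀ := Sym2.out_fst_mem e₀
      set x := e₀.out.1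
      have hx' : x ∈ {v | ∃ e' ∈ (↑A : Set (Sym2 V)), v ∈ e'} := ⟨e₀, he₀, hx⟩
      have happly := (key_iff hT hF hAsub hx').1 hconn
      refine ⟨G.connectedComponentMk x, ⟨x, rfl⟩, ?_, hcard⟩
      intro e he
      rw [hFc, Finset.mem_filter]
      refine ⟨hconn (Or.inl (by exact_mod_cast he)), ?_⟩
      intro v hv
      exact (SimpleGraph.ConnectedComponent.eq.2 (happly v ⟨e, he, hv⟩)).symm
    · rintro ⟨c, ⟨y, rfl⟩, hAFc, hcard⟩
      have hne : A.Nonempty := Finset.card_pos.1 (hcard ▸ ha)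
      have hAF : ∀ e ∈ A, e ∈ F := by
        intro e he
        have := hAFc he
        rw [hFc, Finset.mem_filter] at this
        exact this.1
      have hAsub : (↑A : Set (Sym2 V)) ⊆ T.edgeSet := fun e he => hF (hAF e he)
      obtain ⟨e₀, he₀⟩ := hne
      have hx : e₀.out.1 ∈ e₀ := Sym2.out_fst_mem e₀
      set x := e₀.out.1
      have hx' : x ∈ {v | ∃ e' ∈ (↑A : Set (Sym2 V)), v ∈ e'} := ⟨e₀, he₀, hx⟩
      have hcomp : ∀ v ∈ {v | ∃ e' ∈ (↑A : Set (Sym2 V)), v ∈ e'},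
          G.connectedComponentMk v = G.connectedComponentMk y := by
        rintro v ⟨e, he, hv⟩
        have := hAFc he
        rw [hFc, Finset.mem_filter] at this
        exact this.2 v hv
      refine ⟨⟨e₀, he₀⟩, hAsub, hcard, (key_iff hT hF hAsub hx').2 ?_⟩
      intro v hv
      exact SimpleGraph.ConnectedComponent.exact ((hcomp x hx').trans (hcomp v hv).symm)
  have hdisj : ∀ c ∈ comps, ∀ d ∈ comps, c ≠ d →
      Disjoint (Finset.powersetCard a (Fc c)) (Finset.powersetCard a (Fc d)) := by
    intro c _ d _ hcd
    rw [Finset.disjoint_left]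
    intro A hAc hAd
    rw [Finset.mem_powersetCard] at hAc hAd
    have hne : A.Nonempty := Finset.card_pos.1 (hAc.2 ▸ ha)
    obtain ⟨e, he⟩ := hne
    have h1 := hAc.1 he
    have h2 := hAd.1 he
    rw [hFc, Finset.mem_filter] at h1 h2
    exact hcd ((h1.2 e.out.1 (Sym2.out_fst_mem e)).symm.trans (h2.2 e.out.1 (Sym2.out_fst_mem e)))
  rw [hset, Finset.card_biUnion hdisj]
  calc (∑ c ∈ comps, (Finset.powersetCard a (Fc c)).card)
      = ∑ c ∈ comps, ((c.supp.ncard - 1).choose a) := by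
        refine Finset.sum_congr rfl fun c hc => ?_
        rw [Finset.card_powersetCard]
        have h := component_card_edges hT hF c
        have h' : (Fc c).card + 1 = c.supp.ncard := h
        have h2 : (Fc c).card = c.supp.ncard - 1 := by omega
        rw [h2]
    _ = ((comps.val.map (fun c => c.supp.ncard)).map (fun m => (m - 1).choose a)).sum := by
        rw [Multiset.map_map]
        rfl
end
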